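/- Let d : ℝ → ℝ be continuous, positive, ω-periodic and p : ℝ → ℝ continuous. If the ω-periodic function y* and the delays τᵢ > 0 satisfy p(y*(t)) > d(t+τ)·exp(∫ₜ^{t+τ} d(r) dr) for all t ∈ [0,ω], then for all t ∈ [0,ω]: ∫ₜ^{t+ω} exp(∫_{t+τ}^{s} d(r) dr)·p(y*(s)) ds > exp(∫₀^ω d(r) dr) - 1. -/

import Mathlib

open MeasureTheory Set intervalIntegral

theorem stmt_4 (ω τ : ℝ) (hω : 0 < ω) (hτ : 0 < τ) (d p ystar : ℝ → ℝ)
    (hd : Continuous d) (hdpos : ∀ t, 0 < d t) (hdper : Function.Periodic d ω)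
    (hp : Continuous p) (hy : Continuous ystar) (hyper : Function.Periodic ystar ω)
    (hH3a : ∀ t ∈ Set.Icc (0:ℝ) ω,
      d (t + τ) * Real.exp (∫ r in t..(t + τ), d r) < p (ystar t)) :
    ∀ t ∈ Set.Icc (0:ℝ) ω,
      Real.exp (∫ r in (0:ℝ)..ω, d r) - 1 <
        ∫ s in t..(t + ω), Real.exp (∫ r in (t + τ)..s, d r) * p (ystar s) := by
  have hdint : ∀ a b : ℝ, IntervalIntegrable d volume a b :=
    fun a b => hd.intervalIntegrable a b
  -- Extend the hypothesis to all reals, by periodicity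
  have hQper : Function.Periodic
      (fun s => p (ystar s) - d (s + τ) * Real.exp (∫ r in s..(s + τ), d r)) ω := by
    intro s
    have h1 : ystar (s + ω) = ystar s := hyper s
    have h2 : d (s + ω + τ) = d (s + τ) := by
      have := hdper (s + τ); rw [← this]; ring_nf
    have h3 : (∫ r in (s + ω)..(s + ω + τ), d r) = ∫ r in s..(s + τ), d r := by
      have h4 : s + ω + τ = s + τ + ω := by ring
      rw [h4, ← intervalIntegral.integral_comp_add_right (a := s) (b := s + τ) d ω]
      refine intervalIntegral.integral_congr fun x _ => ?_
      exact hdper x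
    simp only [h1, h2, h3]
  have hH3all : ∀ s : ℝ,
      d (s + τ) * Real.exp (∫ r in s..(s + τ), d r) < p (ystar s) := by
    intro s
    obtain ⟨y, hy1, hy2⟩ := hQper.exists_mem_Ico₀ hω s
    have hy3 := hH3a y ⟨hy1.1, hy1.2.le⟩
    have : (0:ℝ) < p (ystar y) - d (y + τ) * Real.exp (∫ r in y..(y + τ), d r) := by
      linarith
    rw [← hy2] at this
    linarith [this]
  intro t ht
  set I : ℝ → ℝ := fun s => ∫ r in (t + τ)..s, d r with hI
  -- I is continuous and has derivative d
  have hIderiv : ∀ s : ℝ, HasDerivAt I (d s) s := fun s =>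
    intervalIntegral.integral_hasDerivAt_right (hdint _ _)
      (hd.stronglyMeasurableAtFilter _ _) hd.continuousAt
  have hIcont : Continuous I := by
    have : Differentiable ℝ I := fun s => (hIderiv s).differentiableAt
    exact this.continuous
  -- the comparison function and its FTC
  set F : ℝ → ℝ := fun s => Real.exp (I (s + τ)) with hF
  have hFderiv : ∀ s : ℝ, HasDerivAt F (d (s + τ) * Real.exp (I (s + τ))) s := by
    intro s
    have h1 : HasDerivAt (fun s => I (s + τ)) (d (s + τ)) s := by
      have := (hIderiv (s + τ)).comp s ((hasDerivAt_id s).add_const τ)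
      exact (by simpa using this : HasDerivAt (I ∘ fun x => x + τ) (d (s + τ)) s)
    simpa [mul_comm] using h1.exp
  have hGcont : Continuous (fun s => d (s + τ) * Real.exp (I (s + τ))) :=
    (hd.comp (continuous_id.add continuous_const)).mul
      ((hIcont.comp (continuous_id.add continuous_const)).rexp)
  have hFTC : (∫ s in t..(t + ω), d (s + τ) * Real.exp (I (s + τ)))
      = F (t + ω) - F t :=
    intervalIntegral.integral_eq_sub_of_hasDerivAt (fun s _ => hFderiv s)
      (hGcont.intervalIntegrable _ _)
  have hFt : F t = 1 := by simp [hF, hI]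
  have hFtω : F (t + ω) = Real.exp (∫ r in (0:ℝ)..ω, d r) := by
    have h1 : (∫ r in (t + τ)..(t + τ + ω), d r) = ∫ r in (0:ℝ)..(0 + ω), d r :=
      hdper.intervalIntegral_add_eq (t + τ) 0
    have h2 : t + ω + τ = t + τ + ω := by ring
    simp only [hF, hI, h2, h1, zero_add]
  -- pointwise strict inequality
  have hpt : ∀ s : ℝ, d (s + τ) * Real.exp (I (s + τ))
      < Real.exp (I s) * p (ystar s) := by
    intro s
    have hsplit : I s + (∫ r in s..(s + τ), d r) = I (s + τ) :=
      intervalIntegral.integral_add_adjacent_intervals (hdint _ _) (hdint _ _)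
    have key := hH3all s
    have hepos : (0:ℝ) < Real.exp (I s) := Real.exp_pos _
    calc d (s + τ) * Real.exp (I (s + τ))
        = Real.exp (I s) * (d (s + τ) * Real.exp (∫ r in s..(s + τ), d r)) := by
          rw [← hsplit, Real.exp_add]; ring
      _ < Real.exp (I s) * p (ystar s) := by
          exact mul_lt_mul_of_pos_left key hepos
  -- strict integral inequality
  have hHcont : Continuous (fun s => Real.exp (I s) * p (ystar s)) :=
    (hIcont.rexp).mul (hp.comp hy)
  have hint : (∫ s in t..(t + ω), d (s + τ) * Real.exp (I (s + τ)))
      < ∫ s in t..(t + ω), Real.exp (I s) * p (ystar s) := by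
    apply intervalIntegral.integral_lt_integral_of_continuousOn_of_le_of_exists_lt
      (by linarith) hGcont.continuousOn hHcont.continuousOn
      (fun x _ => (hpt x).le)
    exact ⟨t, ⟨le_refl t, by linarith⟩, hpt t⟩
  rw [hFTC, hFt, hFtω] at hint
  exact hint
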